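/- Given $K_0 \in S^n$, a penalty matrix $H$ with $H_{ij} = h_i h_j$, $h_i > 0$, $W = \mathrm{diag}(h)$, and $\alpha \in \mathbb{R}^n$, the unique minimizer over $K \succeq 0$ of $\alpha^T e - \tfrac12 \mathrm{Tr}(K(Y\alpha)(Y\alpha)^T) + \sum_{i,j} H_{ij}(K_{ij} - K_{0,ij})^2$ is $K^* = W^{-1/2}\left( \left( W^{1/2}\left(K_0 + \tfrac14 (W^{-1}Y\alpha)(W^{-1}Y\alpha)^T\right) W^{1/2} \right)_+ \right) W^{-1/2}$. -/

import Mathlib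

open Matrix

noncomputable def frob2 {n : ℕ} (M : Matrix (Fin n) (Fin n) ℝ) : ℝ :=
  Matrix.trace (Mᵀ * M)

def IsPSDProj {n : ℕ} (M P : Matrix (Fin n) (Fin n) ℝ) : Prop :=
  P.PosSemidef ∧ ∀ K : Matrix (Fin n) (Fin n) ℝ, K.PosSemidef →
    frob2 (P - M) ≤ frob2 (K - M)

lemma frob2_eq_sum {n : ℕ} (X : Matrix (Fin n) (Fin n) ℝ) :
    frob2 X = ∑ i, ∑ j, (X i j)^2 := by
  unfold frob2
  rw [Matrix.trace]
  simp only [Matrix.diag, Matrix.mul_apply, Matrix.transpose_apply]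
  rw [Finset.sum_comm]
  simp [sq]

lemma frob2_nonneg {n : ℕ} (X : Matrix (Fin n) (Fin n) ℝ) : 0 ≤ frob2 X := by
  rw [frob2_eq_sum]
  positivity


/-- componentwise-penalized indefinite SVM inner problem with
rank-one penalty `H_{ij} = hᵢhⱼ`: the unique PSD minimizer of
`αᵀe - ½Tr(K(Yα)(Yα)ᵀ) + ∑_{i,j} H_{ij}(K_{ij}-K₀_{ij})²` is
`W^{-1/2}((W^{1/2}(K₀ + ¼(W⁻¹Yα)(W⁻¹Yα)ᵀ)W^{1/2})₊)W^{-1/2}`. -/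
theorem componentwise_penalty_solution {n : ℕ}
    (K₀ : Matrix (Fin n) (Fin n) ℝ) (hK₀ : K₀.IsSymm)
    (h : Fin n → ℝ) (hh : ∀ i, 0 < h i)
    (α y : Fin n → ℝ)
    (v : Fin n → ℝ) (hv : v = fun i => (h i)⁻¹ * (y i * α i))
    (Whalf Winvhalf : Matrix (Fin n) (Fin n) ℝ)
    (hWhalf : Whalf = Matrix.diagonal (fun i => Real.sqrt (h i)))
    (hWinvhalf : Winvhalf = Matrix.diagonal (fun i => (Real.sqrt (h i))⁻¹))
    (P : Matrix (Fin n) (Fin n) ℝ)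
    (hP : IsPSDProj (Whalf * (K₀ + (1/4 : ℝ) • Matrix.vecMulVec v v) * Whalf) P)
    (Kstar : Matrix (Fin n) (Fin n) ℝ)
    (hKstar : Kstar = Winvhalf * P * Winvhalf)
    (obj : Matrix (Fin n) (Fin n) ℝ → ℝ)
    (hobj : ∀ K, obj K = (∑ i, α i)
        - (1/2) * Matrix.trace (K * Matrix.vecMulVec ((Matrix.diagonal y) *ᵥ α)
            ((Matrix.diagonal y) *ᵥ α))
        + ∑ i, ∑ j, h i * h j * (K i j - K₀ i j)^2) :
    Kstar.PosSemidef ∧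
    (∀ K : Matrix (Fin n) (Fin n) ℝ, K.PosSemidef → obj Kstar ≤ obj K) ∧
    (∀ K : Matrix (Fin n) (Fin n) ℝ, K.PosSemidef → obj K = obj Kstar → K = Kstar) := by
  have hsq : ∀ i, Real.sqrt (h i) ≠ 0 := fun i =>
    ne_of_gt (Real.sqrt_pos.mpr (hh i))
  have hu : ∀ i, y i * α i = h i * v i := by
    intro i; rw [hv]; simp only
    rw [← mul_assoc, mul_inv_cancel₀ (ne_of_gt (hh i)), one_mul]
  set M : Matrix (Fin n) (Fin n) ℝ :=
    Whalf * (K₀ + (1/4 : ℝ) • Matrix.vecMulVec v v) * Whalf with hM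
  -- basic matrix identities
  have hWW : Winvhalf * Whalf = 1 := by
    rw [hWinvhalf, hWhalf, Matrix.diagonal_mul_diagonal,
      show (fun i => (Real.sqrt (h i))⁻¹ * Real.sqrt (h i)) = fun _ => (1:ℝ) from
        funext fun i => inv_mul_cancel₀ (hsq i), Matrix.diagonal_one]
  have hWW' : Whalf * Winvhalf = 1 := by
    rw [hWhalf, hWinvhalf, Matrix.diagonal_mul_diagonal,
      show (fun i => Real.sqrt (h i) * (Real.sqrt (h i))⁻¹) = fun _ => (1:ℝ) from
        funext fun i => mul_inv_cancel₀ (hsq i), Matrix.diagonal_one]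
  have hWconj : Whalfᴴ = Whalf := by
    rw [hWhalf, Matrix.diagonal_conjTranspose]; simp
  have hWinvconj : Winvhalfᴴ = Winvhalf := by
    rw [hWinvhalf, Matrix.diagonal_conjTranspose]; simp
  have hT : ∀ K : Matrix (Fin n) (Fin n) ℝ, K.PosSemidef → (Whalf * K * Whalf).PosSemidef := by
    intro K hK
    have := hK.mul_mul_conjTranspose_same Whalf
    rwa [hWconj] at this
  have hTinv : ∀ K : Matrix (Fin n) (Fin n) ℝ,
      Winvhalf * (Whalf * K * Whalf) * Winvhalf = K := by
    intro K
    calc Winvhalf * (Whalf * K * Whalf) * Winvhalf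
        = (Winvhalf * Whalf) * K * (Whalf * Winvhalf) := by
          simp only [Matrix.mul_assoc]
      _ = K := by rw [hWW, hWW', Matrix.one_mul, Matrix.mul_one]
  have hTK : Whalf * Kstar * Whalf = P := by
    rw [hKstar]
    calc Whalf * (Winvhalf * P * Winvhalf) * Whalf
        = (Whalf * Winvhalf) * P * (Winvhalf * Whalf) := by
          simp only [Matrix.mul_assoc]
      _ = P := by rw [hWW, hWW', Matrix.one_mul, Matrix.mul_one]
  -- the completed-square identity
  set C : ℝ := (∑ i, α i) - ∑ i, ∑ j,
      (h i * h j * ((1/4)*(v i * v j))^2 + (1/2) * (h i * v i) * (h j * v j) * K₀ i j) with hC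
  have hkey : ∀ K, obj K = C + frob2 (Whalf * K * Whalf - M) := by
    intro K
    rw [hobj, frob2_eq_sum]
    have htr : Matrix.trace (K * Matrix.vecMulVec ((Matrix.diagonal y) *ᵥ α)
        ((Matrix.diagonal y) *ᵥ α)) =
        ∑ i, ∑ j, K i j * ((h j * v j) * (h i * v i)) := by
      rw [Matrix.trace]
      simp only [Matrix.diag, Matrix.mul_apply, Matrix.vecMulVec_apply,
        Matrix.mulVec_diagonal, hu]
    have hent : ∀ i j, (Whalf * K * Whalf - M) i j ^ 2 =
        h i * h j * (K i j - (K₀ i j + (1/4)*(v i * v j)))^2 := by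
      intro i j
      rw [hM, hWhalf]
      simp only [Matrix.sub_apply, Matrix.mul_diagonal, Matrix.diagonal_mul,
        Matrix.add_apply, Matrix.smul_apply, Matrix.vecMulVec_apply, smul_eq_mul]
      have e1 : Real.sqrt (h i) * Real.sqrt (h i) = h i := Real.mul_self_sqrt (hh i).le
      have e2 : Real.sqrt (h j) * Real.sqrt (h j) = h j := Real.mul_self_sqrt (hh j).le
      linear_combination (Real.sqrt (h j) * Real.sqrt (h j) *
          (K i j - (K₀ i j + (1/4)*(v i * v j)))^2) * e1 +
        (h i * (K i j - (K₀ i j + (1/4)*(v i * v j)))^2) * e2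
    rw [htr, hC]
    have hsum : (∑ i, ∑ j, h i * h j * (K i j - K₀ i j)^2)
        - (1/2) * (∑ i, ∑ j, K i j * ((h j * v j) * (h i * v i)))
        = (∑ i, ∑ j, (Whalf * K * Whalf - M) i j ^ 2)
          - (∑ i, ∑ j, (h i * h j * ((1/4)*(v i * v j))^2
            + (1/2) * (h i * v i) * (h j * v j) * K₀ i j)) := by
      rw [Finset.mul_sum, ← Finset.sum_sub_distrib, ← Finset.sum_sub_distrib]
      apply Finset.sum_congr rfl; intro i _
      rw [Finset.mul_sum, ← Finset.sum_sub_distrib, ← Finset.sum_sub_distrib]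
      apply Finset.sum_congr rfl; intro j _
      rw [hent i j]; ring
    linarith [hsum]
  -- PSD of Kstar
  have hKstarPSD : Kstar.PosSemidef := by
    rw [hKstar]
    have := hP.1.mul_mul_conjTranspose_same Winvhalf
    rwa [hWinvconj] at this
  refine ⟨hKstarPSD, ?_, ?_⟩
  · intro K hK
    rw [hkey, hkey, hTK]
    exact add_le_add_right (hP.2 _ (hT K hK)) C
  · intro K hK heq
    rw [hkey, hkey, hTK] at heq
    replace heq := add_left_cancel heq
    set Q := Whalf * K * Whalf with hQ
    have hQPSD : Q.PosSemidef := hT K hK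
    have hadd := hP.1.add hQPSD
    have hmidPSD : ((1/2 : ℝ) • (P + Q)).PosSemidef := by
      refine ⟨?_, fun x => ?_⟩
      · rw [Matrix.IsHermitian, Matrix.conjTranspose_smul, hadd.1.eq, star_trivial]
      · have key : (x.sum fun i xi => x.sum fun j xj => star xi * ((1 / 2 : ℝ) • (P + Q)) i j * xj)
            = (1/2 : ℝ) * (x.sum fun i xi => x.sum fun j xj => star xi * (P + Q) i j * xj) := by
          simp only [Finsupp.sum, Finset.mul_sum]
          apply Finset.sum_congr rfl; intro i _
          apply Finset.sum_congr rfl; intro j _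
          simp only [Matrix.smul_apply, smul_eq_mul]; ring
        rw [key]
        exact mul_nonneg (by norm_num) (hadd.2 x)
    have hle := hP.2 _ hmidPSD
    have hpar : frob2 ((1/2 : ℝ) • (P + Q) - M) =
        (1/2) * frob2 (P - M) + (1/2) * frob2 (Q - M) - (1/4) * frob2 (P - Q) := by
      rw [frob2_eq_sum, frob2_eq_sum, frob2_eq_sum, frob2_eq_sum]
      simp only [Finset.mul_sum]
      rw [← Finset.sum_add_distrib, ← Finset.sum_sub_distrib]
      apply Finset.sum_congr rfl; intro i _
      rw [← Finset.sum_add_distrib, ← Finset.sum_sub_distrib]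
      apply Finset.sum_congr rfl; intro j _
      simp only [Matrix.sub_apply, Matrix.smul_apply, Matrix.add_apply, smul_eq_mul]
      ring
    rw [hpar, heq] at hle
    have hPQ : frob2 (P - Q) ≤ 0 := by linarith
    have hPQ0 : frob2 (P - Q) = 0 := le_antisymm hPQ (frob2_nonneg _)
    have hPeqQ : P = Q := by
      rw [frob2_eq_sum] at hPQ0
      ext i j
      have hz : ((P - Q) i j)^2 = 0 := by
        have hnn : ∀ i ∈ Finset.univ, (0:ℝ) ≤ ∑ j, ((P - Q) i j)^2 := by
          intro i _; positivity
        have h1 := (Finset.sum_eq_zero_iff_of_nonneg hnn).mp hPQ0 i (Finset.mem_univ i)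
        have hnn2 : ∀ j ∈ Finset.univ, (0:ℝ) ≤ ((P - Q) i j)^2 := by
          intro j _; positivity
        exact (Finset.sum_eq_zero_iff_of_nonneg hnn2).mp h1 j (Finset.mem_univ j)
      have := pow_eq_zero_iff (n := 2) (by norm_num) |>.mp hz
      simpa [Matrix.sub_apply, sub_eq_zero] using this
    calc K = Winvhalf * (Whalf * K * Whalf) * Winvhalf := (hTinv K).symm
      _ = Winvhalf * P * Winvhalf := by rw [← hQ, ← hPeqQ]
      _ = Kstar := hKstar.symm
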